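/- Let g : ℝ^n → ℝ^m be continuously differentiable, let a, b ∈ ℝ^n with a ≤ b componentwise, let X = {x ∈ ℝ^n : a_k ≤ x_k ≤ b_k for all k}, and let x̊ ∈ X. Let l, u ∈ ℝ^{m×n} satisfy the mixed-Jacobian bounds: for all indices i, j, and for every point p ∈ ℝ^n with a_k ≤ p_k ≤ b_k for all k ≤ j and p_k = x̊_k for all k > j, one has l_{ij} ≤ ∂g_i/∂x_j(p) ≤ u_{ij}. Then for every x ∈ X there exists a matrix M ∈ ℝ^{m×n} with l_{ij} ≤ M_{ij} ≤ u_{ij} for all i, j, such that g(x) − g(x̊) = M(x − x̊). -/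

import Mathlib

open Matrix

private lemma hasDerivAt_comp_update {n m : ℕ} {g : (Fin n → ℝ) → (Fin m → ℝ)}
    (hg : ContDiff ℝ 1 g) (base : Fin n → ℝ) (j : Fin n) (i : Fin m) (t : ℝ) :
    HasDerivAt (fun s => g (Function.update base j s) i)
      (fderiv ℝ g (Function.update base j t) (Pi.single j 1) i) t := by
  have h1 := hasDerivAt_update base j t
  have h2 := ((hg.differentiable one_ne_zero) (Function.update base j t)).hasFDerivAt.comp_hasDerivAt
    t h1
  exact hasDerivAt_pi.1 h2 i

private lemma slope_lemma {n m : ℕ} {g : (Fin n → ℝ) → (Fin m → ℝ)}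
    (hg : ContDiff ℝ 1 g) (base : Fin n → ℝ) (j : Fin n) (i : Fin m)
    {s t : ℝ} (hst : s ≠ t) :
    ∃ c ∈ Set.Ioo (min s t) (max s t),
      fderiv ℝ g (Function.update base j c) (Pi.single j 1) i
        = (g (Function.update base j t) i - g (Function.update base j s) i) / (t - s) := by
  rcases hst.lt_or_gt with h | h
  · obtain ⟨c, hc, hc2⟩ := exists_hasDerivAt_eq_slope
      (fun s => g (Function.update base j s) i) _ h
      (fun y _ => (hasDerivAt_comp_update hg base j i y).continuousAt.continuousWithinAt)
      (fun y _ => hasDerivAt_comp_update hg base j i y)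
    exact ⟨c, by simpa [min_eq_left h.le, max_eq_right h.le] using hc, hc2⟩
  · obtain ⟨c, hc, hc2⟩ := exists_hasDerivAt_eq_slope
      (fun s => g (Function.update base j s) i) _ h
      (fun y _ => (hasDerivAt_comp_update hg base j i y).continuousAt.continuousWithinAt)
      (fun y _ => hasDerivAt_comp_update hg base j i y)
    refine ⟨c, by simpa [min_eq_right h.le, max_eq_left h.le] using hc, ?_⟩
    rw [hc2, show g (Function.update base j s) i - g (Function.update base j t) i
        = -(g (Function.update base j t) i - g (Function.update base j s) i) by ring,
      show s - t = -(t - s) by ring, neg_div_neg_eq]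

theorem mixed_jacobian_inclusion {n m : ℕ}
    (g : (Fin n → ℝ) → (Fin m → ℝ)) (hg : ContDiff ℝ 1 g)
    (a b : Fin n → ℝ) (hab : ∀ k, a k ≤ b k)
    (xc : Fin n → ℝ) (hxc : ∀ k, a k ≤ xc k ∧ xc k ≤ b k)
    (l u : Matrix (Fin m) (Fin n) ℝ)
    (hlu : ∀ (i : Fin m) (j : Fin n), ∀ p : Fin n → ℝ,
      (∀ k, k ≤ j → a k ≤ p k ∧ p k ≤ b k) →
      (∀ k, j < k → p k = xc k) →
      l i j ≤ fderiv ℝ g p (Pi.single j 1) i ∧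
        fderiv ℝ g p (Pi.single j 1) i ≤ u i j) :
    ∀ x : Fin n → ℝ, (∀ k, a k ≤ x k ∧ x k ≤ b k) →
      ∃ M : Matrix (Fin m) (Fin n) ℝ,
        (∀ i j, l i j ≤ M i j ∧ M i j ≤ u i j) ∧
        g x - g xc = M.mulVec (x - xc) := by
  intro x hx
  classical
  set mix : ℕ → Fin n → ℝ := fun j k => if (k : ℕ) < j then x k else xc k with hmix
  have hmix0 : mix 0 = xc := by funext k; simp [hmix]
  have hmixn : mix n = x := by funext k; simp [hmix, k.isLt]
  have hupd1 : ∀ j : Fin n, mix ((j : ℕ) + 1) = Function.update (mix j) j (x j) := by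
    intro j; funext k
    rw [Function.update_apply]
    by_cases hkj : k = j
    · subst hkj; simp [hmix]
    · have hkj' : (k : ℕ) ≠ (j : ℕ) := fun h => hkj (Fin.ext h)
      have : ((k : ℕ) < (j : ℕ) + 1) ↔ ((k : ℕ) < (j : ℕ)) := by omega
      simp [hmix, hkj, this]
  have hupd2 : ∀ j : Fin n, mix (j : ℕ) = Function.update (mix j) j (xc j) := by
    intro j; funext k
    rw [Function.update_apply]
    by_cases hkj : k = j
    · subst hkj; simp [hmix]
    · simp [hkj]
  -- the candidate matrix
  refine ⟨fun i j => if x j = xc j then l i j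
    else (g (mix ((j : ℕ) + 1)) i - g (mix j) i) / (x j - xc j), ?_, ?_⟩
  · intro i j
    by_cases hxj : x j = xc j
    · simp only [hxj, if_pos rfl, if_true]
      have hp := hlu i j (mix ((j : ℕ) + 1))
        (fun k hk => by
          have : (k : ℕ) < (j : ℕ) + 1 := Nat.lt_succ_of_le hk
          simpa [hmix, this] using hx k)
        (fun k hk => by
          have : ¬ (k : ℕ) < (j : ℕ) + 1 := by omega
          simp [hmix, this])
      exact ⟨le_rfl, hp.1.trans hp.2⟩
    · simp only [if_neg hxj]
      obtain ⟨c, hc, hc2⟩ := slope_lemma hg (mix j) j i (Ne.symm hxj)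
      rw [← hupd1 j, ← hupd2 j] at hc2
      have hp := hlu i j (Function.update (mix (j : ℕ)) j c)
        (fun k hk => by
          by_cases hkj : k = j
          · subst hkj
            rw [Function.update_self]
            constructor
            · exact le_trans (le_min (hxc k).1 (hx k).1) hc.1.le
            · exact le_trans hc.2.le (max_le (hxc k).2 (hx k).2)
          · have hkj' : (k : ℕ) < (j : ℕ) := lt_of_le_of_ne hk (fun h => hkj (Fin.ext h))
            rw [Function.update_of_ne hkj]
            simpa [hmix, hkj'] using hx k)
        (fun k hk => by
          have hkj : k ≠ j := ne_of_gt hk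
          have : ¬ (k : ℕ) < (j : ℕ) := by omega
          rw [Function.update_of_ne hkj]
          simp [hmix, this])
      rw [hc2] at hp
      exact hp
  · funext i
    have key : ∀ j : Fin n,
        (if x j = xc j then l i j
          else (g (mix ((j : ℕ) + 1)) i - g (mix j) i) / (x j - xc j)) * (x j - xc j)
        = g (mix ((j : ℕ) + 1)) i - g (mix (j : ℕ)) i := by
      intro j
      by_cases hxj : x j = xc j
      · have : mix ((j : ℕ) + 1) = mix (j : ℕ) := by
          rw [hupd1 j, hupd2 j, hxj, Function.update_idem]
        rw [if_pos hxj, hxj, sub_self, mul_zero, this, sub_self]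
      · rw [if_neg hxj, div_mul_cancel₀ _ (sub_ne_zero.2 hxj)]
    have : ∀ v : Fin n → ℝ, (Matrix.mulVec (fun i j => if x j = xc j then l i j
        else (g (mix ((j : ℕ) + 1)) i - g (mix j) i) / (x j - xc j)) v) i
        = ∑ j : Fin n, (if x j = xc j then l i j
          else (g (mix ((j : ℕ) + 1)) i - g (mix j) i) / (x j - xc j)) * v j := by
      intro v; simp [Matrix.mulVec, dotProduct]
    rw [Pi.sub_apply, this]
    rw [show (fun j : Fin n => (if x j = xc j then l i j
      else (g (mix ((j : ℕ) + 1)) i - g (mix j) i) / (x j - xc j)) * (x - xc) j)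
      = fun j : Fin n => g (mix ((j : ℕ) + 1)) i - g (mix (j : ℕ)) i from
        funext fun j => key j]
    rw [Fin.sum_univ_eq_sum_range (fun j => g (mix (j + 1)) i - g (mix j) i) n,
      Finset.sum_range_sub (fun j => g (mix j) i) n, hmix0, hmixn]
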